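/- (Bessel inequality for the weighted Haar system.) Let w be a weight with 0 < m_I w < ∞ for every dyadic interval I. For every g ∈ L₂, Σ_{I∈D} (1/(|I| m_I w)) · ⟨g, w^{1/2} H_I^w⟩²_{L₂} ≤ ‖g‖²_{L₂}, where H_I^w := h_I √|I| − A_I^w χ_I and A_I^w := (m_{I⁺}w − m_{I⁻}w)/(2 m_I w). -/

import Mathlib

open MeasureTheory Set

noncomputable section

/-- The dyadic interval `[k 2^{-j}, (k+1) 2^{-j})`, indexed by `I = (j, k)`. -/
def dyadicI (I : ℤ × ℤ) : Set ℝ :=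
  Set.Ico ((I.2 : ℝ) * 2 ^ (-I.1)) (((I.2 : ℝ) + 1) * 2 ^ (-I.1))

/-- The length `|I| = 2^{-j}` of the dyadic interval indexed by `I = (j, k)`. -/
def len (I : ℤ × ℤ) : ℝ := 2 ^ (-I.1)

/-- The left half `I⁺` of the dyadic interval `I`. -/
def leftHalf (I : ℤ × ℤ) : ℤ × ℤ := (I.1 + 1, 2 * I.2)

/-- The right half `I⁻` of the dyadic interval `I`. -/
def rightHalf (I : ℤ × ℤ) : ℤ × ℤ := (I.1 + 1, 2 * I.2 + 1)

/-- The average `m_I f = (1/|I|) ∫_I f`. -/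
def avg (f : ℝ → ℝ) (I : ℤ × ℤ) : ℝ := (len I)⁻¹ * ∫ x in dyadicI I, f x

/-- The Haar function `h_I = |I|^{-1/2} (χ_{I⁺} - χ_{I⁻})`. -/
def haar (I : ℤ × ℤ) (x : ℝ) : ℝ :=
  (Real.sqrt (len I))⁻¹ *
    ((dyadicI (leftHalf I)).indicator (fun _ => (1 : ℝ)) x -
      (dyadicI (rightHalf I)).indicator (fun _ => (1 : ℝ)) x)

/-- The Haar coefficient `b_I = ⟨b, h_I⟩`. -/
def haarCoef (b : ℝ → ℝ) (I : ℤ × ℤ) : ℝ := ∫ x, b x * haar I x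

/-- The dyadic BMO norm of `b`. -/
def bmoNorm (b : ℝ → ℝ) : ℝ :=
  Real.sqrt (⨆ I : ℤ × ℤ, (len I)⁻¹ * ∫ x in dyadicI I, (b x - avg b I) ^ 2)

/-- The `A₂^d` characteristic `‖w‖_{A₂^d} = sup_I (m_I w)(m_I w⁻¹)`. -/
def A2const (w : ℝ → ℝ) : ℝ :=
  ⨆ I : ℤ × ℤ, avg w I * avg (fun x => (w x)⁻¹) I

/-- `A_I^w = (m_{I⁺}w − m_{I⁻}w)/(2 m_I w)`. -/
def AIw (w : ℝ → ℝ) (I : ℤ × ℤ) : ℝ :=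
  (avg w (leftHalf I) - avg w (rightHalf I)) / (2 * avg w I)

/-- The weighted Haar function `H_I^w = h_I √|I| − A_I^w χ_I`. -/
def weightedHaar (w : ℝ → ℝ) (I : ℤ × ℤ) (x : ℝ) : ℝ :=
  haar I x * Real.sqrt (len I) - AIw w I * (dyadicI I).indicator (fun _ => (1 : ℝ)) x

lemma len_pos (I : ℤ × ℤ) : 0 < len I := zpow_pos (by norm_num) _

lemma len_left (I : ℤ × ℤ) : len (leftHalf I) = len I / 2 := by
  simp only [len, leftHalf, neg_add]
  rw [zpow_add₀ (two_ne_zero)]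
  norm_num; ring

lemma len_right (I : ℤ × ℤ) : len (rightHalf I) = len I / 2 := by
  simp only [len, rightHalf, neg_add]
  rw [zpow_add₀ (two_ne_zero)]
  norm_num; ring

lemma dyadic_union (I : ℤ × ℤ) :
    dyadicI (leftHalf I) ∪ dyadicI (rightHalf I) = dyadicI I := by
  have h2 : (2:ℝ) ^ (-(I.1 + 1)) = 2 ^ (-I.1) / 2 := by
    rw [neg_add, zpow_add₀ (two_ne_zero : (2:ℝ) ≠ 0)]
    norm_num; ring
  have hp : (0:ℝ) < 2 ^ (-I.1) := zpow_pos (by norm_num) _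
  simp only [dyadicI, leftHalf, rightHalf, h2]
  push_cast
  rw [Set.Ico_union_Ico_eq_Ico (by nlinarith) (by nlinarith)]
  congr 1 <;> ring

lemma left_subset (I : ℤ × ℤ) : dyadicI (leftHalf I) ⊆ dyadicI I := by
  rw [← dyadic_union I]; exact Set.subset_union_left

lemma right_subset (I : ℤ × ℤ) : dyadicI (rightHalf I) ⊆ dyadicI I := by
  rw [← dyadic_union I]; exact Set.subset_union_right

lemma halves_disjoint (I : ℤ × ℤ) :
    Disjoint (dyadicI (leftHalf I)) (dyadicI (rightHalf I)) := by
  simp only [dyadicI, leftHalf, rightHalf]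
  apply Set.Ico_disjoint_Ico.2
  apply min_le_of_left_le
  apply le_max_of_le_right
  apply le_of_eq
  push_cast; ring

lemma nest {I J : ℤ × ℤ} (h : I.1 ≤ J.1) :
    Disjoint (dyadicI I) (dyadicI J) ∨ dyadicI J ⊆ dyadicI I := by
  by_cases hd : Disjoint (dyadicI I) (dyadicI J)
  · exact Or.inl hd
  right
  rw [Set.not_disjoint_iff] at hd
  obtain ⟨x, hxI, hxJ⟩ := hd
  obtain ⟨n, hn⟩ := Int.le.dest h
  have hpJ : (0:ℝ) < 2 ^ (-J.1) := zpow_pos (by norm_num) _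
  have hkey : (2:ℝ) ^ (-I.1) = (2:ℝ) ^ n * 2 ^ (-J.1) := by
    rw [← zpow_natCast (2:ℝ) n, ← zpow_add₀ (two_ne_zero : (2:ℝ) ≠ 0)]
    congr 1; omega
  obtain ⟨hxI1, hxI2⟩ := hxI
  obtain ⟨hxJ1, hxJ2⟩ := hxJ
  rw [hkey] at hxI1 hxI2
  -- A : I.2 * 2^n ≤ J.2
  have hA : I.2 * 2 ^ n ≤ J.2 := by
    have : (I.2:ℝ) * 2 ^ n < J.2 + 1 := by
      have h1 : (I.2:ℝ) * 2 ^ n * 2 ^ (-J.1) < ((J.2:ℝ) + 1) * 2 ^ (-J.1) := by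
        calc (I.2:ℝ) * 2 ^ n * 2 ^ (-J.1) = (I.2:ℝ) * (2 ^ n * 2 ^ (-J.1)) := by ring
        _ ≤ x := hxI1
        _ < _ := hxJ2
      exact lt_of_mul_lt_mul_right h1 hpJ.le
    exact_mod_cast Int.lt_add_one_iff.1 (by exact_mod_cast this)
  -- B : J.2 + 1 ≤ (I.2 + 1) * 2^n
  have hB : J.2 + 1 ≤ (I.2 + 1) * 2 ^ n := by
    have : (J.2:ℝ) < ((I.2:ℝ) + 1) * 2 ^ n := by
      have h1 : (J.2:ℝ) * 2 ^ (-J.1) < ((I.2:ℝ) + 1) * 2 ^ n * 2 ^ (-J.1) := by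
        calc (J.2:ℝ) * 2 ^ (-J.1) ≤ x := hxJ1
        _ < ((I.2:ℝ) + 1) * (2 ^ n * 2 ^ (-J.1)) := hxI2
        _ = ((I.2:ℝ) + 1) * 2 ^ n * 2 ^ (-J.1) := by ring
      exact lt_of_mul_lt_mul_right h1 hpJ.le
    exact_mod_cast Int.add_one_le_iff.2 (by exact_mod_cast this)
  intro y hy
  obtain ⟨hy1, hy2⟩ := hy
  constructor
  · rw [hkey]
    calc (I.2:ℝ) * (2 ^ n * 2 ^ (-J.1)) = ((I.2 * 2 ^ n : ℤ) : ℝ) * 2 ^ (-J.1) := by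
          push_cast; ring
    _ ≤ (J.2:ℝ) * 2 ^ (-J.1) := by
          apply mul_le_mul_of_nonneg_right _ hpJ.le
          exact_mod_cast hA
    _ ≤ y := hy1
  · rw [hkey]
    calc y < ((J.2:ℝ) + 1) * 2 ^ (-J.1) := hy2
    _ ≤ (((I.2 + 1) * 2 ^ n : ℤ) : ℝ) * 2 ^ (-J.1) := by
          apply mul_le_mul_of_nonneg_right _ hpJ.le
          exact_mod_cast hB
    _ = ((I.2:ℝ) + 1) * (2 ^ n * 2 ^ (-J.1)) := by push_cast; ring

lemma same_level_disjoint {I J : ℤ × ℤ} (h : I.1 = J.1) (hk : I.2 ≠ J.2) :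
    Disjoint (dyadicI I) (dyadicI J) := by
  have hp : (0:ℝ) < 2 ^ (-J.1) := zpow_pos (by norm_num) _
  apply Set.Ico_disjoint_Ico.2
  rcases lt_or_gt_of_ne hk with hlt | hlt
  · apply min_le_of_left_le
    apply le_max_of_le_right
    rw [h]
    apply mul_le_mul_of_nonneg_right _ hp.le
    have : (I.2:ℝ) + 1 ≤ J.2 := by exact_mod_cast hlt
    linarith
  · apply min_le_of_right_le
    apply le_max_of_le_left
    rw [h]
    apply mul_le_mul_of_nonneg_right _ hp.le
    have : (J.2:ℝ) + 1 ≤ I.2 := by exact_mod_cast hlt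
    linarith

lemma ortho_cases {I J : ℤ × ℤ} (hne : I ≠ J) (h : I.1 ≤ J.1) :
    Disjoint (dyadicI I) (dyadicI J) ∨ dyadicI J ⊆ dyadicI (leftHalf I) ∨
      dyadicI J ⊆ dyadicI (rightHalf I) := by
  rcases eq_or_lt_of_le h with heq | hlt
  · left
    apply same_level_disjoint heq
    intro hk
    exact hne (Prod.ext heq hk)
  · have hL : (leftHalf I).1 ≤ J.1 := by simp [leftHalf]; omega
    have hR : (rightHalf I).1 ≤ J.1 := by simp [rightHalf]; omega
    rcases nest hL with hdL | hsL
    · rcases nest hR with hdR | hsR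
      · left
        rw [← dyadic_union I]
        exact Set.disjoint_union_left.2 ⟨hdL, hdR⟩
      · exact Or.inr (Or.inr hsR)
    · exact Or.inr (Or.inl hsL)

-- explicit form of weightedHaar
lemma wH_eq (w : ℝ → ℝ) (I : ℤ × ℤ) (x : ℝ) :
    weightedHaar w I x =
      (dyadicI (leftHalf I)).indicator (fun _ => (1:ℝ)) x -
        (dyadicI (rightHalf I)).indicator (fun _ => (1:ℝ)) x -
        AIw w I * (dyadicI I).indicator (fun _ => (1:ℝ)) x := by
  have hs : Real.sqrt (len I) ≠ 0 := (Real.sqrt_pos.2 (len_pos I)).ne'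
  simp only [weightedHaar, haar]
  field_simp

lemma wH_of_not_mem {w : ℝ → ℝ} {I : ℤ × ℤ} {x : ℝ} (hx : x ∉ dyadicI I) :
    weightedHaar w I x = 0 := by
  rw [wH_eq]
  have h1 : x ∉ dyadicI (leftHalf I) := fun h => hx (left_subset I h)
  have h2 : x ∉ dyadicI (rightHalf I) := fun h => hx (right_subset I h)
  simp [Set.indicator_of_notMem, h1, h2, hx]

lemma wH_of_mem_left {w : ℝ → ℝ} {I : ℤ × ℤ} {x : ℝ} (hx : x ∈ dyadicI (leftHalf I)) :
    weightedHaar w I x = 1 - AIw w I := by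
  rw [wH_eq]
  have h1 : x ∈ dyadicI I := left_subset I hx
  have h2 : x ∉ dyadicI (rightHalf I) := fun h =>
    (halves_disjoint I).le_bot ⟨hx, h⟩
  simp [hx, h1, h2]

lemma wH_of_mem_right {w : ℝ → ℝ} {I : ℤ × ℤ} {x : ℝ} (hx : x ∈ dyadicI (rightHalf I)) :
    weightedHaar w I x = -(1 + AIw w I) := by
  rw [wH_eq]
  have h1 : x ∈ dyadicI I := right_subset I hx
  have h2 : x ∉ dyadicI (leftHalf I) := fun h =>
    (halves_disjoint I).le_bot ⟨h, hx⟩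
  simp [hx, h1, h2]; ring

lemma wH_abs_le (w : ℝ → ℝ) (I : ℤ × ℤ) (x : ℝ) :
    |weightedHaar w I x| ≤ 1 + |AIw w I| := by
  by_cases h1 : x ∈ dyadicI (leftHalf I)
  · rw [wH_of_mem_left h1]
    calc |1 - AIw w I| ≤ |(1:ℝ)| + |AIw w I| := abs_sub _ _
    _ = 1 + |AIw w I| := by norm_num
  by_cases h2 : x ∈ dyadicI (rightHalf I)
  · rw [wH_of_mem_right h2, abs_neg]
    calc |1 + AIw w I| ≤ |(1:ℝ)| + |AIw w I| := abs_add_le _ _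
    _ = 1 + |AIw w I| := by norm_num
  have hx : x ∉ dyadicI I := by
    rw [← dyadic_union I]
    simp [h1, h2]
  rw [wH_of_not_mem hx]
  simp
  positivity

lemma measurable_dyadic (I : ℤ × ℤ) : MeasurableSet (dyadicI I) := measurableSet_Ico

lemma measurable_wH (w : ℝ → ℝ) (I : ℤ × ℤ) : Measurable (weightedHaar w I) := by
  have : weightedHaar w I = fun x =>
      (dyadicI (leftHalf I)).indicator (fun _ => (1:ℝ)) x -
        (dyadicI (rightHalf I)).indicator (fun _ => (1:ℝ)) x -
        AIw w I * (dyadicI I).indicator (fun _ => (1:ℝ)) x := funext (wH_eq w I)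
  rw [this]
  apply Measurable.sub
  apply Measurable.sub
  · exact (measurable_const.indicator (measurable_dyadic _))
  · exact (measurable_const.indicator (measurable_dyadic _))
  · exact (measurable_const.indicator (measurable_dyadic _)).const_mul _

lemma intW_eq (w : ℝ → ℝ) (I : ℤ × ℤ) : ∫ x in dyadicI I, w x = len I * avg w I := by
  rw [avg, ← mul_assoc, mul_inv_cancel₀ (len_pos I).ne', one_mul]

lemma intW_split {w : ℝ → ℝ} (hwint : ∀ I : ℤ × ℤ, IntegrableOn w (dyadicI I) volume)
    (I : ℤ × ℤ) :
    ∫ x in dyadicI I, w x =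
      (∫ x in dyadicI (leftHalf I), w x) + ∫ x in dyadicI (rightHalf I), w x := by
  rw [← dyadic_union I, setIntegral_union (halves_disjoint I) (measurable_dyadic _)
    (hwint _) (hwint _)]

lemma ind_w_integrable {w : ℝ → ℝ} (hwint : ∀ I : ℤ × ℤ, IntegrableOn w (dyadicI I) volume)
    (K : ℤ × ℤ) : Integrable ((dyadicI K).indicator w) :=
  (hwint K).integrable_indicator (measurable_dyadic K)

lemma w_mul_ind (w : ℝ → ℝ) (K : ℤ × ℤ) (x : ℝ) :
    w x * (dyadicI K).indicator (fun _ => (1:ℝ)) x = (dyadicI K).indicator w x := by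
  by_cases h : x ∈ dyadicI K <;> simp [h]

lemma AIw_key {w : ℝ → ℝ} (hwavg : ∀ I : ℤ × ℤ, 0 < avg w I) (I : ℤ × ℤ) :
    AIw w I * (len I * avg w I) =
      (∫ x in dyadicI (leftHalf I), w x) - ∫ x in dyadicI (rightHalf I), w x := by
  have hm : avg w I ≠ 0 := (hwavg I).ne'
  have hl : len (leftHalf I) = len I / 2 := len_left I
  have hr : len (rightHalf I) = len I / 2 := len_right I
  have hL : len I ≠ 0 := (len_pos I).ne'
  rw [intW_eq, intW_eq, AIw, avg, avg, hl, hr]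
  field_simp

lemma integral_wH_zero {w : ℝ → ℝ}
    (hwint : ∀ I : ℤ × ℤ, IntegrableOn w (dyadicI I) volume)
    (hwavg : ∀ I : ℤ × ℤ, 0 < avg w I) (J : ℤ × ℤ) :
    ∫ x, w x * weightedHaar w J x = 0 := by
  have heq : (fun x => w x * weightedHaar w J x) = fun x =>
      ((dyadicI (leftHalf J)).indicator w x - (dyadicI (rightHalf J)).indicator w x) -
        AIw w J * (dyadicI J).indicator w x := by
    funext x
    rw [wH_eq, mul_sub, mul_sub, w_mul_ind, w_mul_ind, ← mul_assoc,
      mul_comm (w x) (AIw w J), mul_assoc, w_mul_ind]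
  rw [heq]
  have h1 : Integrable (fun x => (dyadicI (leftHalf J)).indicator w x -
      (dyadicI (rightHalf J)).indicator w x) :=
    (ind_w_integrable hwint _).sub (ind_w_integrable hwint _)
  have h2 : Integrable (fun x => AIw w J * (dyadicI J).indicator w x) :=
    (ind_w_integrable hwint _).const_mul _
  rw [integral_sub h1 h2,
    integral_sub (ind_w_integrable hwint _) (ind_w_integrable hwint _),
    integral_const_mul,
    integral_indicator (measurable_dyadic _), integral_indicator (measurable_dyadic _),
    integral_indicator (measurable_dyadic _)]
  rw [intW_eq w J, AIw_key hwavg J]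
  ring

lemma integrable_wHH {w : ℝ → ℝ}
    (hwint : ∀ I : ℤ × ℤ, IntegrableOn w (dyadicI I) volume) (I J : ℤ × ℤ) :
    Integrable (fun x => w x * (weightedHaar w I x * weightedHaar w J x)) := by
  have heq : (fun x => w x * (weightedHaar w I x * weightedHaar w J x)) =
      fun x => (weightedHaar w I x * weightedHaar w J x) * (dyadicI I).indicator w x := by
    funext x
    by_cases h : x ∈ dyadicI I
    · rw [Set.indicator_of_mem h]; ring
    · rw [Set.indicator_of_notMem h, wH_of_not_mem h]; ring
  rw [heq]
  apply Integrable.bdd_mul (c := (1 + |AIw w I|) * (1 + |AIw w J|)) (ind_w_integrable hwint I)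
  · exact ((measurable_wH w I).mul (measurable_wH w J)).aestronglyMeasurable
  · refine Filter.Eventually.of_forall (fun x => ?_)
    rw [Real.norm_eq_abs, abs_mul]
    apply mul_le_mul (wH_abs_le w I x) (wH_abs_le w J x) (abs_nonneg _)
    positivity

lemma ortho_le {w : ℝ → ℝ}
    (hwint : ∀ I : ℤ × ℤ, IntegrableOn w (dyadicI I) volume)
    (hwavg : ∀ I : ℤ × ℤ, 0 < avg w I) {I J : ℤ × ℤ} (hne : I ≠ J) (hle : I.1 ≤ J.1) :
    ∫ x, w x * (weightedHaar w I x * weightedHaar w J x) = 0 := by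
  rcases ortho_cases hne hle with hd | hs | hs
  · have : (fun x => w x * (weightedHaar w I x * weightedHaar w J x)) = fun _ => (0:ℝ) := by
      funext x
      by_cases h : x ∈ dyadicI I
      · have : x ∉ dyadicI J := fun h' => hd.le_bot ⟨h, h'⟩
        rw [wH_of_not_mem this]; ring
      · rw [wH_of_not_mem h]; ring
    rw [this, integral_zero]
  · have : (fun x => w x * (weightedHaar w I x * weightedHaar w J x)) =
        fun x => (1 - AIw w I) * (w x * weightedHaar w J x) := by
      funext x
      by_cases h : x ∈ dyadicI J
      · rw [wH_of_mem_left (hs h)]; ring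
      · rw [wH_of_not_mem h]; ring
    rw [this, integral_const_mul, integral_wH_zero hwint hwavg, mul_zero]
  · have : (fun x => w x * (weightedHaar w I x * weightedHaar w J x)) =
        fun x => (-(1 + AIw w I)) * (w x * weightedHaar w J x) := by
      funext x
      by_cases h : x ∈ dyadicI J
      · rw [wH_of_mem_right (hs h)]; ring
      · rw [wH_of_not_mem h]; ring
    rw [this, integral_const_mul, integral_wH_zero hwint hwavg, mul_zero]

lemma ortho {w : ℝ → ℝ}
    (hwint : ∀ I : ℤ × ℤ, IntegrableOn w (dyadicI I) volume)
    (hwavg : ∀ I : ℤ × ℤ, 0 < avg w I) {I J : ℤ × ℤ} (hne : I ≠ J) :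
    ∫ x, w x * (weightedHaar w I x * weightedHaar w J x) = 0 := by
  rcases le_total I.1 J.1 with h | h
  · exact ortho_le hwint hwavg hne h
  · have := ortho_le hwint hwavg (Ne.symm hne) h
    rw [← this]
    congr 1
    funext x
    ring

lemma norm_bound {w : ℝ → ℝ}
    (hwint : ∀ I : ℤ × ℤ, IntegrableOn w (dyadicI I) volume)
    (hwavg : ∀ I : ℤ × ℤ, 0 < avg w I) (I : ℤ × ℤ) :
    ∫ x, w x * (weightedHaar w I x * weightedHaar w I x) ≤ len I * avg w I := by
  set A := AIw w I with hA
  have heq : (fun x => w x * (weightedHaar w I x * weightedHaar w I x)) =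
      fun x => (1 - A)^2 * (dyadicI (leftHalf I)).indicator w x +
        (1 + A)^2 * (dyadicI (rightHalf I)).indicator w x := by
    funext x
    by_cases h1 : x ∈ dyadicI (leftHalf I)
    · have h2 : x ∉ dyadicI (rightHalf I) := fun h => (halves_disjoint I).le_bot ⟨h1, h⟩
      rw [wH_of_mem_left h1, Set.indicator_of_mem h1, Set.indicator_of_notMem h2]
      ring
    by_cases h2 : x ∈ dyadicI (rightHalf I)
    · rw [wH_of_mem_right h2, Set.indicator_of_mem h2, Set.indicator_of_notMem h1]
      ring
    · have hx : x ∉ dyadicI I := by rw [← dyadic_union I]; simp [h1, h2]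
      rw [wH_of_not_mem hx, Set.indicator_of_notMem h1, Set.indicator_of_notMem h2]
      ring
  rw [heq, integral_add ((ind_w_integrable hwint _).const_mul _)
    ((ind_w_integrable hwint _).const_mul _), integral_const_mul, integral_const_mul,
    integral_indicator (measurable_dyadic _), integral_indicator (measurable_dyadic _)]
  set p := ∫ x in dyadicI (leftHalf I), w x with hp'
  set q := ∫ x in dyadicI (rightHalf I), w x with hq'
  have hp : 0 < p := by
    rw [hp', intW_eq]
    exact mul_pos (len_pos _) (hwavg _)
  have hq : 0 < q := by
    rw [hq', intW_eq]
    exact mul_pos (len_pos _) (hwavg _)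
  have hsum : len I * avg w I = p + q := by
    rw [← intW_eq, intW_split hwint]
  have hAk : A * (p + q) = p - q := by
    rw [← hsum, hA, AIw_key hwavg I]
  rw [hsum]
  have h3 : A * (A * (p + q)) = A * (p - q) := by rw [hAk]
  nlinarith [mul_nonneg (mul_self_nonneg A) (by linarith : (0:ℝ) ≤ p + q), h3]

lemma EE_eq {w : ℝ → ℝ} (hwpos : ∀ x, 0 < w x) (I J : ℤ × ℤ) :
    (fun x => (Real.sqrt (w x) * weightedHaar w I x) *
        (Real.sqrt (w x) * weightedHaar w J x)) =
      fun x => w x * (weightedHaar w I x * weightedHaar w J x) := by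
  funext x
  rw [show Real.sqrt (w x) * weightedHaar w I x * (Real.sqrt (w x) * weightedHaar w J x)
      = (Real.sqrt (w x) * Real.sqrt (w x)) * (weightedHaar w I x * weightedHaar w J x)
      from by ring, Real.mul_self_sqrt (hwpos x).le]

lemma integrable_EE {w : ℝ → ℝ} (hwpos : ∀ x, 0 < w x)
    (hwint : ∀ I : ℤ × ℤ, IntegrableOn w (dyadicI I) volume) (I J : ℤ × ℤ) :
    Integrable (fun x => (Real.sqrt (w x) * weightedHaar w I x) *
      (Real.sqrt (w x) * weightedHaar w J x)) := by
  rw [EE_eq hwpos]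
  exact integrable_wHH hwint I J

lemma aesm_E {w : ℝ → ℝ} (hwint : ∀ I : ℤ × ℤ, IntegrableOn w (dyadicI I) volume) (I : ℤ × ℤ) :
    AEStronglyMeasurable (fun x => Real.sqrt (w x) * weightedHaar w I x) volume := by
  have heq : (fun x => Real.sqrt (w x) * weightedHaar w I x) =
      fun x => Real.sqrt ((dyadicI I).indicator w x) * weightedHaar w I x := by
    funext x
    by_cases h : x ∈ dyadicI I
    · rw [Set.indicator_of_mem h]
    · rw [Set.indicator_of_notMem h, wH_of_not_mem h, mul_zero, mul_zero]
  rw [heq]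
  exact (Real.continuous_sqrt.comp_aestronglyMeasurable
    (ind_w_integrable hwint I).aestronglyMeasurable).mul
    (measurable_wH w I).aestronglyMeasurable

lemma integrable_gE {w : ℝ → ℝ} (hwpos : ∀ x, 0 < w x)
    (hwint : ∀ I : ℤ × ℤ, IntegrableOn w (dyadicI I) volume)
    {g : ℝ → ℝ} (hg : Measurable g) (hg2 : Integrable (fun x => (g x) ^ 2)) (I : ℤ × ℤ) :
    Integrable (fun x => g x * (Real.sqrt (w x) * weightedHaar w I x)) := by
  apply Integrable.mono'
    ((hg2.add (integrable_wHH hwint I I)).div_const 2)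
    (hg.aestronglyMeasurable.mul (aesm_E hwint I))
  filter_upwards with x
  set s := Real.sqrt (w x) * weightedHaar w I x with hs
  have hs2 : s ^ 2 = w x * (weightedHaar w I x * weightedHaar w I x) := by
    rw [hs, mul_pow, Real.sq_sqrt (hwpos x).le]; ring
  simp only [Pi.mul_apply, Pi.add_apply]
  rw [Real.norm_eq_abs, abs_mul]
  nlinarith [sq_nonneg (|g x| - |s|), sq_abs (g x), sq_abs s, abs_nonneg (g x), abs_nonneg s]


/-- Bessel's inequality for the weighted Haar system: for every `g ∈ L₂`,
`Σ_{I∈D} (1/(|I| m_I w)) ⟨g, w^{1/2} H_I^w⟩² ≤ ‖g‖²_{L₂}`. -/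
theorem bessel_weighted_haar
    (w : ℝ → ℝ) (hwpos : ∀ x, 0 < w x)
    (hwint : ∀ I : ℤ × ℤ, IntegrableOn w (dyadicI I) volume)
    (hwavg : ∀ I : ℤ × ℤ, 0 < avg w I)
    (g : ℝ → ℝ) (hg : Measurable g) (hg2 : Integrable (fun x => (g x) ^ 2)) :
    ∀ S : Finset (ℤ × ℤ),
      ∑ I ∈ S, (len I * avg w I)⁻¹ *
          (∫ x, g x * (Real.sqrt (w x) * weightedHaar w I x)) ^ 2
        ≤ ∫ x, (g x) ^ 2 := by
  intro S
  set E : ℤ × ℤ → ℝ → ℝ := fun I x => Real.sqrt (w x) * weightedHaar w I x with hE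
  set c : ℤ × ℤ → ℝ := fun I => ∫ x, g x * E I x with hc
  set n : ℤ × ℤ → ℝ := fun I => len I * avg w I with hn
  have hnpos : ∀ I, 0 < n I := fun I => mul_pos (len_pos I) (hwavg I)
  set a : ℤ × ℤ → ℝ := fun I => c I / n I with ha
  set h : ℝ → ℝ := fun x => ∑ I ∈ S, a I * E I x with hh
  have hgE : ∀ I : ℤ × ℤ, Integrable (fun x => g x * E I x) :=
    fun I => integrable_gE hwpos hwint hg hg2 I
  have hEE : ∀ I J : ℤ × ℤ, Integrable (fun x => E I x * E J x) :=
    fun I J => integrable_EE hwpos hwint I J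
  have hEEval : ∀ I J : ℤ × ℤ, I ≠ J → ∫ x, E I x * E J x = 0 := by
    intro I J hne
    rw [hE]
    simp only
    rw [EE_eq hwpos]
    exact ortho hwint hwavg hne
  have hEEself : ∀ I : ℤ × ℤ, ∫ x, E I x * E I x ≤ n I := by
    intro I
    rw [hE]
    simp only
    rw [EE_eq hwpos]
    exact norm_bound hwint hwavg I
  -- integral of g * h
  have hgh_int : Integrable (fun x => g x * h x) := by
    have : (fun x => g x * h x) = fun x => ∑ I ∈ S, a I * (g x * E I x) := by
      funext x
      rw [hh]
      simp only
      rw [Finset.mul_sum]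
      exact Finset.sum_congr rfl (fun I _ => by ring)
    rw [this]
    exact integrable_finset_sum S (fun I _ => (hgE I).const_mul _)
  have hgh : ∫ x, g x * h x = ∑ I ∈ S, a I * c I := by
    have heq : (fun x => g x * h x) = fun x => ∑ I ∈ S, a I * (g x * E I x) := by
      funext x
      rw [hh]
      simp only
      rw [Finset.mul_sum]
      exact Finset.sum_congr rfl (fun I _ => by ring)
    rw [heq, integral_finset_sum S (fun I _ => (hgE I).const_mul _)]
    exact Finset.sum_congr rfl (fun I _ => by rw [integral_const_mul])
  -- integral of h * h
  have hhh_eq : (fun x => h x * h x) =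
      fun x => ∑ I ∈ S, ∑ J ∈ S, (a I * a J) * (E I x * E J x) := by
    funext x
    rw [hh]
    simp only
    rw [Finset.sum_mul_sum]
    exact Finset.sum_congr rfl (fun I _ => Finset.sum_congr rfl (fun J _ => by ring))
  have hhh_int : Integrable (fun x => h x * h x) := by
    rw [hhh_eq]
    exact integrable_finset_sum S (fun I _ =>
      integrable_finset_sum S (fun J _ => (hEE I J).const_mul _))
  have hhh : ∫ x, h x * h x ≤ ∑ I ∈ S, a I * c I := by
    rw [hhh_eq, integral_finset_sum S (fun I _ =>
      integrable_finset_sum S (fun J _ => (hEE I J).const_mul _))]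
    apply Finset.sum_le_sum
    intro I hI
    rw [integral_finset_sum S (fun J _ => (hEE I J).const_mul _)]
    have hrow : ∀ J ∈ S, (∫ x, (a I * a J) * (E I x * E J x)) =
        if J = I then a I * a J * ∫ x, E I x * E J x else 0 := by
      intro J _
      rw [integral_const_mul]
      by_cases hJ : J = I
      · simp [hJ]
      · rw [hEEval I J (fun hIJ => hJ hIJ.symm), mul_zero, if_neg hJ]
    calc ∑ J ∈ S, ∫ x, (a I * a J) * (E I x * E J x)
        = ∑ J ∈ S, if J = I then a I * a J * ∫ x, E I x * E J x else 0 :=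
          Finset.sum_congr rfl hrow
      _ = a I * a I * ∫ x, E I x * E I x := by
          rw [Finset.sum_ite_eq' S I (fun J => a I * a J * ∫ x, E I x * E J x), if_pos hI]
      _ ≤ a I * a I * n I := by
          apply mul_le_mul_of_nonneg_left (hEEself I) (mul_self_nonneg _)
      _ = a I * c I := by
          have hne : n I ≠ 0 := (hnpos I).ne'
          rw [ha]
          simp only
          field_simp
  -- expansion of ∫ (g - h)^2
  have hA_int : Integrable (fun x => g x ^ 2 - 2 * (g x * h x)) :=
    hg2.sub (hgh_int.const_mul 2)
  have hexp : (fun x => (g x - h x) ^ 2) =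
      fun x => (g x ^ 2 - 2 * (g x * h x)) + h x * h x := by
    funext x
    ring
  have hkey : 0 ≤ ∫ x, (g x - h x) ^ 2 := integral_nonneg (fun x => sq_nonneg _)
  rw [hexp, integral_add hA_int hhh_int, integral_sub hg2 (hgh_int.const_mul 2),
    integral_const_mul, hgh] at hkey
  have hfin : ∑ I ∈ S, a I * c I ≤ ∫ x, (g x) ^ 2 := by linarith
  calc ∑ I ∈ S, (len I * avg w I)⁻¹ *
        (∫ x, g x * (Real.sqrt (w x) * weightedHaar w I x)) ^ 2
      = ∑ I ∈ S, a I * c I := by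
        apply Finset.sum_congr rfl
        intro I _
        rw [ha, hc, hn, hE]
        simp only
        field_simp
    _ ≤ ∫ x, (g x) ^ 2 := hfin
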